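/- Then for every t, the map t ↦ ∑_l ⟪V̂ l, U⟫ • K t l has derivative (F t) U at t; that is, the conserved quantity φ_S(t) = ∑_l ⟪V̂ l, U⟫ • K t l reconstructed from the K-step of the parallel BUG integrator satisfies the exact local conservation law ∂_t φ_S(t) = ⟨F(t, Y_K(t)), U⟩_v. -/

import Mathlib

open RealInnerProductSpace

/-- Along the continuous K-step of the parallel BUG integrator,
the reconstructed conserved quantity `φ_S(t) = ∑ l, ⟪Vhat l, U⟫ • K t l`
satisfies the exact local conservation law `∂ₜ φ_S(t) = (F t) U`. -/
theorem parallelBUG_Kstep_continuous_conservation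
    {Hx Hv : Type*} [NormedAddCommGroup Hx] [NormedSpace ℝ Hx]
    [NormedAddCommGroup Hv] [InnerProductSpace ℝ Hv]
    {q : ℕ} (Vhat : Fin q → Hv)
    (hV : ∀ i j, ⟪Vhat i, Vhat j⟫ = if i = j then 1 else 0)
    (U : Hv) (hU : U = ∑ l, ⟪U, Vhat l⟫ • Vhat l)
    (F : ℝ → (Hv →L[ℝ] Hx))
    (K : ℝ → Fin q → Hx)
    (hK : ∀ l t, HasDerivAt (fun τ => K τ l) ((F t) (Vhat l)) t) :
    ∀ t, HasDerivAt (fun τ => ∑ l, ⟪Vhat l, U⟫ • K τ l) ((F t) U) t := by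
  intro t
  have h : HasDerivAt (fun τ => ∑ l, ⟪Vhat l, U⟫ • K τ l)
      (∑ l, ⟪Vhat l, U⟫ • (F t) (Vhat l)) t :=
    HasDerivAt.fun_sum fun l _ => (hK l t).const_smul _
  have : (∑ l, ⟪Vhat l, U⟫ • (F t) (Vhat l)) = (F t) U := by
    conv_rhs => rw [hU]
    rw [map_sum]
    refine Finset.sum_congr rfl fun l _ => ?_
    rw [real_inner_comm, (F t).map_smul]
  rwa [this] at h
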